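/- Let G be a graph with minimum degree at least 3 and maximum degree s, and let Cl(G) be its clustering. Then Ex(Cl(G)) ≥ (1/s)·Ex(G). -/

import Mathlib

open SimpleGraph Finset

open scoped Classical
set_option linter.unusedSectionVars false
set_option maxHeartbeats 1000000

noncomputable def cutCount {V : Type*} (G : SimpleGraph V) (S : Set V) : ℕ :=
  {p : V × V | p.1 ∈ S ∧ p.2 ∉ S ∧ G.Adj p.1 p.2}.ncard

noncomputable def expSet {V : Type*} (G : SimpleGraph V) (S : Set V) : ℝ :=
  (cutCount G S : ℝ) / (min S.ncard Sᶜ.ncard : ℕ)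

noncomputable def expG {V : Type*} (G : SimpleGraph V) : ℝ :=
  ⨅ S : {S : Set V // S.Nonempty ∧ S ≠ Set.univ}, expSet G S.1

/-- Vertices of the clustering `Cl(G)`: the directed edges of `G`. -/
def ClVert {V : Type*} (G : SimpleGraph V) : Type _ := {p : V × V // G.Adj p.1 p.2}

/-- The clustering `Cl(G)` of `G`: each vertex `u` becomes a clique on its incident
directed edges `(u,v)`, and `(u,v)` is joined to `(v,u)` for each edge of `G`. -/
def clustering {V : Type*} (G : SimpleGraph V) : SimpleGraph (ClVert G) :=
  SimpleGraph.fromRel fun a b =>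
    (a.1.1 = b.1.2 ∧ a.1.2 = b.1.1) ∨ a.1.1 = b.1.1

section Basic

lemma expSet_nonneg {W : Type*} (H : SimpleGraph W) (S : Set W) : 0 ≤ expSet H S := by
  unfold expSet
  positivity

lemma expG_nonneg {W : Type*} (H : SimpleGraph W) : 0 ≤ expG H :=
  Real.iInf_nonneg fun _ => expSet_nonneg H _

lemma expG_le {W : Type*} (H : SimpleGraph W) (S : Set W) (h1 : S.Nonempty)
    (h2 : S ≠ Set.univ) : expG H ≤ expSet H S := by
  have : BddBelow (Set.range fun S : {S : Set W // S.Nonempty ∧ S ≠ Set.univ} => expSet H S.1) :=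
    ⟨0, by rintro x ⟨y, rfl⟩; exact expSet_nonneg H _⟩
  exact ciInf_le this ⟨S, h1, h2⟩

lemma cutCount_compl {W : Type*} [Fintype W] (H : SimpleGraph W) (S : Set W) :
    cutCount H Sᶜ = cutCount H S := by
  unfold cutCount
  have : {p : W × W | p.1 ∈ Sᶜ ∧ p.2 ∉ Sᶜ ∧ H.Adj p.1 p.2} =
      Prod.swap '' {p : W × W | p.1 ∈ S ∧ p.2 ∉ S ∧ H.Adj p.1 p.2} := by
    ext ⟨x, y⟩
    constructor
    · rintro ⟨ha, hb, hadj⟩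
      exact ⟨(y, x), ⟨by simpa using hb, ha, hadj.symm⟩, rfl⟩
    · rintro ⟨⟨x', y'⟩, ⟨hx, hy, hadj⟩, h⟩
      cases h
      exact ⟨hy, by simpa using hx, hadj.symm⟩
  rw [this, Set.ncard_image_of_injective _ Prod.swap_injective]

lemma expSet_compl {W : Type*} [Fintype W] (H : SimpleGraph W) (S : Set W) :
    expSet H Sᶜ = expSet H S := by
  unfold expSet
  rw [cutCount_compl, compl_compl, min_comm]

lemma cutCount_eq_card {W : Type*} [Fintype W] (H : SimpleGraph W) (S : Set W) :
    cutCount H S =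
      (Finset.univ.filter fun p : W × W => p.1 ∈ S ∧ p.2 ∉ S ∧ H.Adj p.1 p.2).card := by
  rw [cutCount, ← Set.ncard_coe_finset]
  congr 1
  ext p
  simp

/-- The purely arithmetic core of the expansion bound. -/
lemma arith_core (s : ℕ) (E : ℝ) (he0 : 0 ≤ E) (heS : E ≤ s)
    (tn tcn scn sccn M X SA SB CA CB cutG : ℕ)
    (hta : tn = SA + CA) (htb : tcn = SB + CB)
    (hc : tn ≤ tcn)
    (hf4 : CB ≤ sccn * s)
    (hf5 : 2 * (SB + CA) ≤ X)
    (hf6 : cutG ≤ M + SB + CA)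
    (hSA0 : scn = 0 → SA = 0 ∧ SB = 0)
    (hCC0 : sccn = 0 → CA = 0 ∧ CB = 0)
    (hf3 : SA ≤ scn * s)
    (hE2 : scn ≠ 0 → sccn ≠ 0 → E * (min scn sccn : ℕ) ≤ (cutG : ℝ)) :
    E * tn ≤ ((X + M : ℕ) : ℝ) * s := by
  have r5 : 2 * ((SB : ℝ) + CA) ≤ X := by exact_mod_cast hf5
  have r6 : (cutG : ℝ) ≤ M + SB + CA := by exact_mod_cast hf6
  have rta : (tn : ℝ) = SA + CA := by exact_mod_cast hta
  have rtb : (tcn : ℝ) = SB + CB := by exact_mod_cast htb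
  have rc : (tn : ℝ) ≤ tcn := by exact_mod_cast hc
  have h5 : (s : ℝ) * (2 * (SB + CA)) ≤ s * X :=
    mul_le_mul_of_nonneg_left r5 (by positivity)
  by_cases hs0 : scn = 0
  · obtain ⟨hA, hB⟩ := hSA0 hs0
    have h3 : E * CA ≤ s * CA := mul_le_mul_of_nonneg_right heS (by positivity)
    push_cast
    rw [rta]
    push_cast [hA, hB] at *
    nlinarith [h3, h5]
  · by_cases hc0 : sccn = 0
    · obtain ⟨hA, hB⟩ := hCC0 hc0
      have h3 : E * SB ≤ s * SB := mul_le_mul_of_nonneg_right heS (by positivity)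
      have hE' : E * tn ≤ E * tcn := mul_le_mul_of_nonneg_left rc he0
      push_cast
      push_cast [hA, hB] at rtb h5 hE' h3
      nlinarith [h3, h5, hE', rtb]
    · have hE2' := hE2 hs0 hc0
      rcases le_total scn sccn with h | h
      · rw [min_eq_left h] at hE2'
        have r3 : (SA : ℝ) ≤ (scn : ℝ) * s := by exact_mod_cast hf3
        have h1 : E * SA ≤ E * (scn * s) := mul_le_mul_of_nonneg_left r3 he0
        have h2 : (s : ℝ) * (E * scn) ≤ s * cutG :=
          mul_le_mul_of_nonneg_left hE2' (by positivity)
        have h3 : E * CA ≤ s * CA := mul_le_mul_of_nonneg_right heS (by positivity)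
        have h4 : (s : ℝ) * cutG ≤ s * (M + SB + CA) :=
          mul_le_mul_of_nonneg_left r6 (by positivity)
        have hsb : (0:ℝ) ≤ (s : ℝ) * SB := by positivity
        push_cast
        nlinarith [h1, h2, h3, h4, h5, hsb, rta]
      · rw [min_eq_right h] at hE2'
        have r4 : (CB : ℝ) ≤ (sccn : ℝ) * s := by exact_mod_cast hf4
        have h1 : E * CB ≤ E * (sccn * s) := mul_le_mul_of_nonneg_left r4 he0
        have h2 : (s : ℝ) * (E * sccn) ≤ s * cutG :=
          mul_le_mul_of_nonneg_left hE2' (by positivity)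
        have h3 : E * SB ≤ s * SB := mul_le_mul_of_nonneg_right heS (by positivity)
        have h4 : (s : ℝ) * cutG ≤ s * (M + SB + CA) :=
          mul_le_mul_of_nonneg_left r6 (by positivity)
        have hca : (0:ℝ) ≤ (s : ℝ) * CA := by positivity
        have hE' : E * tn ≤ E * tcn := mul_le_mul_of_nonneg_left rc he0
        push_cast
        nlinarith [h1, h2, h3, h4, h5, hca, hE', rtb]

end Basic

section Aux

variable {V : Type*} [Fintype V] (G : SimpleGraph V) [DecidableRel G.Adj]

noncomputable instance : Fintype (ClVert G) :=
  inferInstanceAs (Fintype {p : V × V // G.Adj p.1 p.2})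

/-- The reversal of a directed edge. -/
def swapE (e : ClVert G) : ClVert G := ⟨(e.1.2, e.1.1), e.2.symm⟩

lemma swapE_swapE (e : ClVert G) : swapE G (swapE G e) = e := rfl

lemma clustering_adj (a b : ClVert G) : (clustering G).Adj a b ↔
    a ≠ b ∧ ((a.1.1 = b.1.2 ∧ a.1.2 = b.1.1) ∨ a.1.1 = b.1.1) := by
  unfold clustering
  rw [fromRel_adj]
  constructor
  · rintro ⟨h, (h2 | h2) | (h2 | h2)⟩
    exacts [⟨h, Or.inl h2⟩, ⟨h, Or.inr h2⟩, ⟨h, Or.inl ⟨h2.2.symm, h2.1.symm⟩⟩,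
      ⟨h, Or.inr h2.symm⟩]
  · rintro ⟨h, h2 | h2⟩
    exacts [⟨h, Or.inl (Or.inl h2)⟩, ⟨h, Or.inl (Or.inr h2)⟩]

lemma expG_le_s (s : ℕ) (v0 : V) (hdeg : ∀ v, 3 ≤ G.degree v ∧ G.degree v ≤ s) :
    expG G ≤ s := by
  obtain ⟨w, hw⟩ : ∃ w, G.Adj v0 w := by
    have h0 : 0 < G.degree v0 := by have := (hdeg v0).1; omega
    rw [← card_neighborFinset_eq_degree, Finset.card_pos] at h0
    obtain ⟨w, hw⟩ := h0
    exact ⟨w, (mem_neighborFinset G v0 w).1 hw⟩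
  have hne : w ≠ v0 := (G.ne_of_adj hw).symm
  have h2 : ({v0} : Set V) ≠ Set.univ := by
    intro h
    have : w ∈ ({v0} : Set V) := h ▸ Set.mem_univ w
    exact hne (by simpa using this)
  refine le_trans (expG_le G {v0} ⟨v0, rfl⟩ h2) ?_
  unfold expSet
  have hmin : min ({v0} : Set V).ncard ({v0}ᶜ : Set V).ncard = 1 := by
    rw [Set.ncard_singleton]
    refine min_eq_left ?_
    refine (Set.ncard_pos (Set.toFinite _)).2 ⟨w, by simpa using hne⟩
  rw [hmin]
  simp only [Nat.cast_one, div_one]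
  have hle : cutCount G {v0} ≤ G.degree v0 := by
    have hsub : {p : V × V | p.1 ∈ ({v0} : Set V) ∧ p.2 ∉ ({v0} : Set V) ∧ G.Adj p.1 p.2} ⊆
        (fun y => (v0, y)) '' G.neighborSet v0 := by
      rintro ⟨x, y⟩ ⟨hx, _, hadj⟩
      simp only [Set.mem_singleton_iff] at hx
      subst hx
      exact ⟨y, hadj, rfl⟩
    refine le_trans (Set.ncard_le_ncard hsub (Set.toFinite _)) ?_
    rw [Set.ncard_image_of_injective _ (fun x y h => congrArg Prod.snd h)]
    rw [← card_neighborFinset_eq_degree, neighborFinset_def, Set.ncard_eq_toFinset_card']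
  have := (hdeg v0).2
  exact_mod_cast le_trans hle this

variable (T : Set (ClVert G))

noncomputable def aF (u : V) : Finset (ClVert G) :=
  Finset.univ.filter (fun e => e.1.1 = u ∧ e ∈ T)

noncomputable def bF (u : V) : Finset (ClVert G) :=
  Finset.univ.filter (fun e => e.1.1 = u ∧ e ∉ T)

noncomputable def cutF : Finset (ClVert G × ClVert G) :=
  Finset.univ.filter (fun p => p.1 ∈ T ∧ p.2 ∉ T ∧ (clustering G).Adj p.1 p.2)

noncomputable def mF : Finset (ClVert G) :=
  Finset.univ.filter (fun e => e ∈ T ∧ swapE G e ∉ T)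

noncomputable def bigS : Finset V :=
  Finset.univ.filter (fun u => G.degree u ≤ 2 * (aF G T u).card)

lemma sum_aF : ∑ u, (aF G T u).card = T.ncard := by
  rw [Set.ncard_eq_toFinset_card']
  rw [Finset.card_eq_sum_card_fiberwise (f := fun e : ClVert G => e.1.1) (t := Finset.univ)
    (fun x _ => Finset.mem_univ _)]
  congr 1
  ext u
  congr 1
  ext e
  simp [aF, and_comm]

lemma sum_bF : ∑ u, (bF G T u).card = Tᶜ.ncard := by
  rw [Set.ncard_eq_toFinset_card']
  rw [Finset.card_eq_sum_card_fiberwise (f := fun e : ClVert G => e.1.1) (t := Finset.univ)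
    (fun x _ => Finset.mem_univ _)]
  congr 1
  ext u
  congr 1
  ext e
  simp [bF, and_comm]

lemma aF_card_add_bF_card (u : V) : (aF G T u).card + (bF G T u).card = G.degree u := by
  have hdisj : Disjoint (aF G T u) (bF G T u) := by
    rw [Finset.disjoint_left]
    intro e he he'
    simp only [aF, bF, Finset.mem_filter] at he he'
    exact he'.2.2 he.2.2
  rw [← Finset.card_union_of_disjoint hdisj]
  have hu : aF G T u ∪ bF G T u = Finset.univ.filter (fun e : ClVert G => e.1.1 = u) := by
    ext e
    simp only [aF, bF, Finset.mem_union, Finset.mem_filter, Finset.mem_univ, true_and]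
    tauto
  rw [hu, ← card_neighborFinset_eq_degree]
  apply Finset.card_bij (fun e _ => e.1.2)
  · intro e he
    simp only [Finset.mem_filter, Finset.mem_univ, true_and] at he
    rw [mem_neighborFinset]
    exact he ▸ e.2
  · intro e he f hf h
    simp only [Finset.mem_filter, Finset.mem_univ, true_and] at he hf
    exact Subtype.ext (Prod.ext (he.trans hf.symm) h)
  · intro y hy
    rw [mem_neighborFinset] at hy
    exact ⟨⟨(u, y), hy⟩, Finset.mem_filter.2 ⟨Finset.mem_univ _, rfl⟩, rfl⟩

lemma cutF_card : (cutF G T).card =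
    (∑ u, (aF G T u).card * (bF G T u).card) + (mF G T).card := by
  classical
  rw [← Finset.card_filter_add_card_filter_not
    (s := cutF G T) (p := fun p => p.1.1.1 = p.2.1.1)]
  congr 1
  · -- same-cluster part
    rw [Finset.card_eq_sum_card_fiberwise (f := fun p : ClVert G × ClVert G => p.1.1.1)
      (t := Finset.univ) (fun x _ => Finset.mem_univ _)]
    apply Finset.sum_congr rfl
    intro u _
    rw [← Finset.card_product]
    congr 1
    ext ⟨p, q⟩
    simp only [cutF, Finset.mem_filter, Finset.mem_univ, true_and, Finset.mem_product,
      aF, bF]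
    constructor
    · rintro ⟨⟨⟨hp, hq, _⟩, hsame⟩, hu⟩
      exact ⟨⟨hu, hp⟩, ⟨hsame ▸ hu, hq⟩⟩
    · rintro ⟨⟨hu, hp⟩, ⟨hu', hq⟩⟩
      refine ⟨⟨⟨hp, hq, ?_⟩, hu.trans hu'.symm⟩, hu⟩
      rw [clustering_adj]
      exact ⟨fun h => hq (h ▸ hp), Or.inr (hu.trans hu'.symm)⟩
  · -- matching part
    apply Finset.card_bij (fun p _ => p.1)
    · intro p hp
      simp only [cutF, Finset.mem_filter, Finset.mem_univ, true_and] at hp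
      obtain ⟨⟨hp1, hp2, hadj⟩, hne⟩ := hp
      rw [clustering_adj] at hadj
      have hsw : p.2 = swapE G p.1 := by
        rcases hadj.2 with ⟨h1, h2⟩ | h
        · exact Subtype.ext (Prod.ext h2.symm h1.symm)
        · exact absurd h hne
      simp only [mF, Finset.mem_filter, Finset.mem_univ, true_and]
      exact ⟨hp1, hsw ▸ hp2⟩
    · intro p hp q hq h
      simp only [cutF, Finset.mem_filter, Finset.mem_univ, true_and] at hp hq
      obtain ⟨⟨_, _, hadjp⟩, hnep⟩ := hp
      obtain ⟨⟨_, _, hadjq⟩, hneq⟩ := hq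
      rw [clustering_adj] at hadjp hadjq
      have hp2 : p.2 = swapE G p.1 := by
        rcases hadjp.2 with ⟨h1, h2⟩ | hh
        · exact Subtype.ext (Prod.ext h2.symm h1.symm)
        · exact absurd hh hnep
      have hq2 : q.2 = swapE G q.1 := by
        rcases hadjq.2 with ⟨h1, h2⟩ | hh
        · exact Subtype.ext (Prod.ext h2.symm h1.symm)
        · exact absurd hh hneq
      exact Prod.ext h (by rw [hp2, hq2, h])
    · intro e he
      simp only [mF, Finset.mem_filter, Finset.mem_univ, true_and] at he
      have hne : e.1.1 ≠ e.1.2 := G.ne_of_adj e.2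
      refine ⟨(e, swapE G e), ?_, rfl⟩
      simp only [cutF, Finset.mem_filter, Finset.mem_univ, true_and]
      refine ⟨⟨he.1, he.2, ?_⟩, hne⟩
      rw [clustering_adj]
      refine ⟨fun h => hne ?_, Or.inl ⟨rfl, rfl⟩⟩
      have := congrArg (fun x : ClVert G => x.1.1) h
      exact this

lemma cutCount_clustering_eq : cutCount (clustering G) T = (cutF G T).card := by
  rw [cutCount_eq_card]
  rfl

lemma cutG_le : cutCount G ↑(bigS G T) ≤ (mF G T).card
    + (∑ u ∈ bigS G T, (bF G T u).card) + (∑ u ∈ (bigS G T)ᶜ, (aF G T u).card) := by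
  classical
  set S := bigS G T
  have h1 : cutCount G ↑S =
      (Finset.univ.filter fun e : ClVert G => e.1.1 ∈ S ∧ e.1.2 ∉ S).card := by
    rw [cutCount_eq_card]
    symm
    apply Finset.card_bij (fun e _ => e.1)
    · intro e he
      simp only [Finset.mem_filter, Finset.mem_univ, true_and] at he ⊢
      exact ⟨by simpa using he.1, by simpa using he.2, e.2⟩
    · intro e _ f _ h
      exact Subtype.ext h
    · intro p hp
      simp only [Finset.mem_filter, Finset.mem_univ, true_and] at hp
      exact ⟨⟨p, hp.2.2⟩, Finset.mem_filter.2 ⟨Finset.mem_univ _, Finset.mem_coe.1 hp.1, fun h => hp.2.1 (Finset.mem_coe.2 h)⟩, rfl⟩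
  rw [h1]
  set cGE := Finset.univ.filter fun e : ClVert G => e.1.1 ∈ S ∧ e.1.2 ∉ S with hcGE
  have hsplit : cGE ⊆ (cGE.filter (fun e => e ∈ T ∧ swapE G e ∉ T)) ∪
      (cGE.filter (fun e => e ∉ T)) ∪ (cGE.filter (fun e => e ∈ T ∧ swapE G e ∈ T)) := by
    intro e he
    simp only [Finset.mem_union, Finset.mem_filter]
    by_cases h1 : e ∈ T
    · by_cases h2 : swapE G e ∈ T
      · exact Or.inr ⟨he, h1, h2⟩
      · exact Or.inl (Or.inl ⟨he, h1, h2⟩)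
    · exact Or.inl (Or.inr ⟨he, h1⟩)
  calc cGE.card ≤ _ := Finset.card_le_card hsplit
    _ ≤ ((cGE.filter (fun e => e ∈ T ∧ swapE G e ∉ T)) ∪
      (cGE.filter (fun e => e ∉ T))).card + (cGE.filter (fun e => e ∈ T ∧ swapE G e ∈ T)).card :=
      Finset.card_union_le _ _
    _ ≤ (cGE.filter (fun e => e ∈ T ∧ swapE G e ∉ T)).card +
      (cGE.filter (fun e => e ∉ T)).card + (cGE.filter (fun e => e ∈ T ∧ swapE G e ∈ T)).card :=
      by gcongr; exact Finset.card_union_le _ _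
    _ ≤ (mF G T).card + (∑ u ∈ S, (bF G T u).card) + (∑ u ∈ Sᶜ, (aF G T u).card) := by
      gcongr
      · -- matching part
        intro e he
        simp only [Finset.mem_filter, mF, Finset.mem_univ, true_and] at he ⊢
        exact he.2
      · -- b part
        have : (cGE.filter (fun e => e ∉ T)) ⊆
            Finset.univ.filter (fun e : ClVert G => e.1.1 ∈ S ∧ e ∉ T) := by
          intro e he
          simp only [hcGE, Finset.mem_filter, Finset.mem_univ, true_and] at he ⊢
          exact ⟨he.1.1, he.2⟩
        refine le_trans (Finset.card_le_card this) ?_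
        rw [Finset.card_eq_sum_card_fiberwise (f := fun e : ClVert G => e.1.1) (t := S)
          (by intro e he; exact (Finset.mem_filter.1 he).2.1)]
        apply le_of_eq
        apply Finset.sum_congr rfl
        intro u hu
        congr 1
        ext e
        simp only [bF, Finset.mem_filter, Finset.mem_univ, true_and]
        constructor
        · rintro ⟨⟨_, h2⟩, h3⟩; exact ⟨h3, h2⟩
        · rintro ⟨h3, h2⟩; exact ⟨⟨h3 ▸ hu, h2⟩, h3⟩
      · -- a part
        have hinj : Set.InjOn (swapE G) (cGE.filter (fun e => e ∈ T ∧ swapE G e ∈ T)) := by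
          intro x _ y _ h
          have := congrArg (swapE G) h
          rwa [swapE_swapE, swapE_swapE] at this
        have hmaps : ∀ e ∈ cGE.filter (fun e => e ∈ T ∧ swapE G e ∈ T),
            swapE G e ∈ Finset.univ.filter (fun e : ClVert G => e.1.1 ∉ S ∧ e ∈ T) := by
          intro e he
          simp only [hcGE, Finset.mem_filter, Finset.mem_univ, true_and] at he ⊢
          exact ⟨he.1.2, he.2.2⟩
        refine le_trans (Finset.card_le_card_of_injOn (swapE G) hmaps hinj) ?_
        have hmem : ∀ e ∈ Finset.univ.filter (fun e : ClVert G => e.1.1 ∉ S ∧ e ∈ T),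
            e.1.1 ∈ Sᶜ := by
          intro e he
          simp only [Finset.mem_filter] at he
          simpa using he.2.1
        rw [Finset.card_eq_sum_card_fiberwise (f := fun e : ClVert G => e.1.1) (t := Sᶜ) hmem]
        apply le_of_eq
        apply Finset.sum_congr rfl
        intro u hu
        congr 1
        ext e
        simp only [aF, Finset.mem_filter, Finset.mem_univ, true_and]
        constructor
        · rintro ⟨⟨_, h2⟩, h3⟩; exact ⟨h3, h2⟩
        · rintro ⟨h3, h2⟩
          refine ⟨⟨?_, h2⟩, h3⟩
          rw [h3]; simpa using hu

lemma key_ineq (u : V) (hd : 3 ≤ G.degree u)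
    (hsum : (aF G T u).card + (bF G T u).card = G.degree u) :
    (u ∈ bigS G T → 2 * (bF G T u).card ≤ (aF G T u).card * (bF G T u).card) ∧
    (u ∉ bigS G T → 2 * (aF G T u).card ≤ (aF G T u).card * (bF G T u).card) := by
  set a := (aF G T u).card
  set b := (bF G T u).card
  constructor
  · intro hu
    simp only [bigS, Finset.mem_filter, Finset.mem_univ, true_and] at hu
    rcases Nat.eq_zero_or_pos b with hb | hb
    · simp [hb]
    · have ha : 2 ≤ a := by omega
      exact mul_le_mul_left ha b
  · intro hu
    simp only [bigS, Finset.mem_filter, Finset.mem_univ, true_and] at hu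
    rcases Nat.eq_zero_or_pos a with ha | ha
    · simp [ha]
    · have hb : 2 ≤ b := by omega
      rw [mul_comm a b]
      exact mul_le_mul_left hb a

/-- Main per-set bound, assuming `|T| ≤ |Tᶜ|`. -/
lemma main_le (s : ℕ) (hdeg : ∀ v, 3 ≤ G.degree v ∧ G.degree v ≤ s) (v0 : V)
    (hT1 : T.Nonempty) (hT2 : T ≠ Set.univ) (hc : T.ncard ≤ Tᶜ.ncard) :
    expG G / s ≤ expSet (clustering G) T := by
  classical
  have hs3 : 3 ≤ s := le_trans (hdeg v0).1 (hdeg v0).2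
  have hsR : (0:ℝ) < s := by exact_mod_cast (by omega : 0 < s)
  set E := expG G with hE
  have he0 : 0 ≤ E := expG_nonneg G
  have heS : E ≤ s := expG_le_s G s v0 hdeg
  set S := bigS G T with hSdef
  set a : V → ℕ := fun u => (aF G T u).card with ha
  set b : V → ℕ := fun u => (bF G T u).card with hb
  have hab : ∀ u, a u + b u = G.degree u := fun u => aF_card_add_bF_card G T u
  have has : ∀ u, a u ≤ s := fun u => by
    have h1 := hab u; have h2 := (hdeg u).2; omega
  -- tail quantities
  set M := (mF G T).card with hM
  set X := ∑ u, a u * b u with hX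
  set SA := ∑ u ∈ S, a u with hSA
  set SB := ∑ u ∈ S, b u with hSB
  set CA := ∑ u ∈ Sᶜ, a u with hCA
  set CB := ∑ u ∈ Sᶜ, b u with hCB
  have hta : T.ncard = SA + CA := by
    rw [← sum_aF G T, hSA, hCA, Finset.sum_add_sum_compl]
  have htb : Tᶜ.ncard = SB + CB := by
    rw [← sum_bF G T, hSB, hCB, Finset.sum_add_sum_compl]
  have hcut : cutCount (clustering G) T = X + M := by
    rw [cutCount_clustering_eq, cutF_card]
  have hf3 : SA ≤ S.card * s := by
    calc SA ≤ ∑ _u ∈ S, s := Finset.sum_le_sum (fun u _ => has u)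
      _ = S.card * s := by rw [Finset.sum_const, smul_eq_mul]
  have hf4 : CB ≤ Sᶜ.card * s := by
    calc CB ≤ ∑ _u ∈ Sᶜ, s := Finset.sum_le_sum (fun u _ => by
        have h1 := hab u; have h2 := (hdeg u).2; omega)
      _ = Sᶜ.card * s := by rw [Finset.sum_const, smul_eq_mul]
  have hf5 : 2 * (SB + CA) ≤ X := by
    have h1 : ∀ u ∈ S, 2 * b u ≤ a u * b u := fun u hu =>
      (key_ineq G T u (hdeg u).1 (hab u)).1 hu
    have h2 : ∀ u ∈ Sᶜ, 2 * a u ≤ a u * b u := fun u hu =>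
      (key_ineq G T u (hdeg u).1 (hab u)).2 (Finset.mem_compl.1 hu)
    calc 2 * (SB + CA) = ∑ u ∈ S, 2 * b u + ∑ u ∈ Sᶜ, 2 * a u := by
          rw [hSB, hCA, mul_add, Finset.mul_sum, Finset.mul_sum]
      _ ≤ ∑ u ∈ S, a u * b u + ∑ u ∈ Sᶜ, a u * b u :=
          add_le_add (Finset.sum_le_sum h1) (Finset.sum_le_sum h2)
      _ = X := Finset.sum_add_sum_compl S _
  have hf6 : cutCount G ↑S ≤ M + SB + CA := cutG_le G T
  have hSA0 : S.card = 0 → SA = 0 ∧ SB = 0 := by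
    intro h
    rw [Finset.card_eq_zero] at h
    constructor <;> simp [hSA, hSB, h]
  have hCC0 : Sᶜ.card = 0 → CA = 0 ∧ CB = 0 := by
    intro h
    rw [Finset.card_eq_zero] at h
    constructor <;> simp [hCA, hCB, h]
  have hE2 : S.card ≠ 0 → Sᶜ.card ≠ 0 → E * (min S.card Sᶜ.card : ℕ) ≤ (cutCount G ↑S : ℝ) := by
    intro h1 h2
    have hS1 : (↑S : Set V).Nonempty := by
      rw [Finset.coe_nonempty]
      exact Finset.card_pos.1 (Nat.pos_of_ne_zero h1)
    have hS2 : (↑S : Set V) ≠ Set.univ := by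
      rw [← Finset.coe_univ]
      intro h
      have : S = Finset.univ := Finset.coe_injective h
      rw [this] at h2
      simp at h2
    have h := expG_le G ↑S hS1 hS2
    unfold expSet at h
    have hmin : min (↑S : Set V).ncard ((↑S : Set V)ᶜ).ncard = min S.card Sᶜ.card := by
      rw [Set.ncard_coe_finset, ← Finset.coe_compl, Set.ncard_coe_finset]
    rw [hmin] at h
    have hminpos : (0:ℝ) < (min S.card Sᶜ.card : ℕ) := by
      have : 0 < min S.card Sᶜ.card :=
        lt_min (Nat.pos_of_ne_zero h1) (Nat.pos_of_ne_zero h2)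
      exact_mod_cast this
    rw [le_div_iff₀ hminpos] at h
    exact h
  -- now convert the goal
  have hT0 : (0:ℝ) < T.ncard := by
    have : 0 < T.ncard := (Set.ncard_pos (Set.toFinite _)).2 hT1
    exact_mod_cast this
  unfold expSet
  rw [min_eq_left hc, div_le_div_iff₀ hsR hT0, hcut]
  have := arith_core s E he0 heS T.ncard Tᶜ.ncard S.card Sᶜ.card M X SA SB CA CB
    (cutCount G ↑S) hta htb hc hf4 hf5 hf6 hSA0 hCC0 hf3 hE2
  exact this

end Aux

/-- If `G` has minimum degree at least 3 and maximum degree at most `s`, then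
`Ex(Cl(G)) ≥ (1/s)·Ex(G)`. -/
theorem clustering_expansion {V : Type*} [Fintype V] (G : SimpleGraph V)
    [DecidableRel G.Adj] (s : ℕ)
    (hdeg : ∀ v, 3 ≤ G.degree v ∧ G.degree v ≤ s) :
    expG G / s ≤ expG (clustering G) := by
  classical
  by_cases hV : Nonempty V
  · obtain ⟨v0⟩ := hV
    have hmain : ∀ T : Set (ClVert G), T.Nonempty → T ≠ Set.univ →
        expG G / s ≤ expSet (clustering G) T := by
      intro T hT1 hT2
      rcases le_total T.ncard Tᶜ.ncard with h | h
      · exact main_le G T s hdeg v0 hT1 hT2 h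
      · rw [← expSet_compl (clustering G) T]
        have h1 : Tᶜ.Nonempty := Set.nonempty_compl.2 hT2
        have h2 : Tᶜ ≠ Set.univ := by
          intro hcon
          rw [Set.compl_univ_iff] at hcon
          exact hT1.ne_empty hcon
        refine main_le G Tᶜ s hdeg v0 h1 h2 ?_
        rw [compl_compl]
        exact h
    -- the index type for the clustering infimum is nonempty
    obtain ⟨w, hw⟩ : ∃ w, G.Adj v0 w := by
      have h0 : 0 < G.degree v0 := by have := (hdeg v0).1; omega
      rw [← card_neighborFinset_eq_degree, Finset.card_pos] at h0
      obtain ⟨w, hw⟩ := h0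
      exact ⟨w, (mem_neighborFinset G v0 w).1 hw⟩
    have hNe : Nonempty {S : Set (ClVert G) // S.Nonempty ∧ S ≠ Set.univ} := by
      refine ⟨⟨{⟨(v0, w), hw⟩}, ⟨_, rfl⟩, ?_⟩⟩
      intro h
      have hmem : (⟨(w, v0), hw.symm⟩ : ClVert G) ∈ ({⟨(v0, w), hw⟩} : Set (ClVert G)) :=
        h ▸ Set.mem_univ _
      replace hmem : (⟨(w, v0), hw.symm⟩ : ClVert G) = ⟨(v0, w), hw⟩ := hmem
      have := congrArg (fun x : ClVert G => x.1.1) hmem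
      exact (G.ne_of_adj hw).symm this
    rw [expG]
    exact le_ciInf fun T => hmain T.1 T.2.1 T.2.2
  · have hIE : IsEmpty {S : Set V // S.Nonempty ∧ S ≠ Set.univ} := by
      constructor
      rintro ⟨S, ⟨x, _⟩, _⟩
      exact (not_nonempty_iff.mp hV).false x
    have h0 : expG G = 0 := by
      rw [expG, Real.iInf_of_isEmpty]
    rw [h0, zero_div]
    exact expG_nonneg (clustering G)
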